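/- Score of the Gaussian-smoothed density as a posterior expectation (Tweedie-type identity). Let p : ℝ^n → [0, ∞) be a Lebesgue-measurable probability density (∫ p dx = 1), let σ > 0, let φ_σ(u) := (2πσ²)^{−n/2}·exp(−‖u‖²/(2σ²)), and let q_σ(y) := ∫ p(x)·φ_σ(y − x) dx. Then for every y ∈ ℝ^n, q_σ(y) > 0, the function log q_σ is differentiable at y, and ∇ log q_σ(y) = (1/q_σ(y)) · ∫ p(x)·((x − y)/σ²)·φ_σ(y − x) dx; that is, the score of the smoothed density equals the conditional expectation of ∇_y log φ_σ(y − x) = (x − y)/σ² given the noisy observation y. -/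

import Mathlib

open MeasureTheory

/-- The density of a centered Gaussian `N(0, σ² I)` on `ℝⁿ`. -/
noncomputable def gaussianKernel (n : ℕ) (σ : ℝ) (u : EuclideanSpace ℝ (Fin n)) : ℝ :=
  (2 * Real.pi * σ ^ 2) ^ (-(n : ℝ) / 2) * Real.exp (-‖u‖ ^ 2 / (2 * σ ^ 2))

/-- The Gaussian-smoothed density `q_σ = p * φ_σ`. -/
noncomputable def smoothedDensity (n : ℕ) (σ : ℝ) (p : EuclideanSpace ℝ (Fin n) → ℝ)
    (y : EuclideanSpace ℝ (Fin n)) : ℝ :=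
  ∫ x, p x * gaussianKernel n σ (y - x)

section Aux

variable {n : ℕ} {σ : ℝ}

lemma gaussianKernel_pos (hσ : 0 < σ) (u : EuclideanSpace ℝ (Fin n)) :
    0 < gaussianKernel n σ u :=
  mul_pos (Real.rpow_pos_of_pos (by positivity) _) (Real.exp_pos _)

lemma exp_term_le_one (hσ : 0 < σ) (u : EuclideanSpace ℝ (Fin n)) :
    Real.exp (-‖u‖ ^ 2 / (2 * σ ^ 2)) ≤ 1 :=
  Real.exp_le_one_iff.mpr
    (div_nonpos_of_nonpos_of_nonneg (neg_nonpos.mpr (by positivity)) (by positivity))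

lemma gaussianKernel_le (hσ : 0 < σ) (u : EuclideanSpace ℝ (Fin n)) :
    gaussianKernel n σ u ≤ (2 * Real.pi * σ ^ 2) ^ (-(n : ℝ) / 2) := by
  calc (2 * Real.pi * σ ^ 2) ^ (-(n : ℝ) / 2) * Real.exp (-‖u‖ ^ 2 / (2 * σ ^ 2))
      ≤ (2 * Real.pi * σ ^ 2) ^ (-(n : ℝ) / 2) * 1 := by
        apply mul_le_mul_of_nonneg_left (exp_term_le_one hσ u)
        positivity
    _ = _ := mul_one _

lemma gaussianKernel_continuous : Continuous (gaussianKernel n σ) := by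
  unfold gaussianKernel; fun_prop

/-- Key scalar inequality: `t·exp(-t²/(2σ²)) ≤ √2·σ`. -/
lemma mul_exp_neg_sq_le (hσ : 0 < σ) {t : ℝ} (ht : 0 ≤ t) :
    t * Real.exp (-t ^ 2 / (2 * σ ^ 2)) ≤ Real.sqrt 2 * σ := by
  have hs2 : Real.sqrt 2 * Real.sqrt 2 = 2 := Real.mul_self_sqrt (by norm_num)
  have hs2pos : 0 < Real.sqrt 2 := by positivity
  rcases le_or_gt t (Real.sqrt 2 * σ) with h | h
  · have h1 : Real.exp (-t ^ 2 / (2 * σ ^ 2)) ≤ 1 :=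
      Real.exp_le_one_iff.mpr
        (div_nonpos_of_nonpos_of_nonneg (neg_nonpos.mpr (by positivity)) (by positivity))
    calc t * Real.exp (-t ^ 2 / (2 * σ ^ 2)) ≤ t * 1 :=
          mul_le_mul_of_nonneg_left h1 ht
      _ = t := mul_one _
      _ ≤ _ := h
  · have ht0 : 0 < t := lt_trans (by positivity) h
    have ha : 0 < t ^ 2 / (2 * σ ^ 2) := by positivity
    have hexp : t ^ 2 / (2 * σ ^ 2) ≤ Real.exp (t ^ 2 / (2 * σ ^ 2)) :=
      le_trans (by linarith) (Real.add_one_le_exp _)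
    have h2 : Real.exp (-t ^ 2 / (2 * σ ^ 2)) ≤ (t ^ 2 / (2 * σ ^ 2))⁻¹ := by
      rw [neg_div, Real.exp_neg]
      exact inv_anti₀ ha hexp
    have h3 : t * Real.exp (-t ^ 2 / (2 * σ ^ 2)) ≤ t * (t ^ 2 / (2 * σ ^ 2))⁻¹ :=
      mul_le_mul_of_nonneg_left h2 ht0.le
    have h4 : t * (t ^ 2 / (2 * σ ^ 2))⁻¹ = 2 * σ ^ 2 / t := by
      field_simp
    rw [h4] at h3
    refine h3.trans ?_
    rw [div_le_iff₀ ht0]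
    nlinarith [mul_le_mul_of_nonneg_left h.le (mul_pos hs2pos hσ).le]

/-- The Fréchet derivative of the Gaussian kernel. -/
lemma gaussianKernel_hasFDerivAt (hσ : 0 < σ) (u : EuclideanSpace ℝ (Fin n)) :
    HasFDerivAt (gaussianKernel n σ)
      ((-(gaussianKernel n σ u / σ ^ 2)) • innerSL ℝ u) u := by
  have h1 : HasFDerivAt (fun u : EuclideanSpace ℝ (Fin n) => ‖u‖ ^ 2)
      (2 • innerSL ℝ u) u := by
    simpa using (hasFDerivAt_id u).norm_sq
  have h2 : HasFDerivAt (fun u : EuclideanSpace ℝ (Fin n) => -(1 / (2 * σ ^ 2)) * ‖u‖ ^ 2)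
      ((-(1 / (2 * σ ^ 2))) • (2 • innerSL ℝ u)) u := h1.const_mul _
  have h3 := (Real.hasDerivAt_exp (-(1 / (2 * σ ^ 2)) * ‖u‖ ^ 2)).comp_hasFDerivAt u h2
  have h4 := h3.const_mul ((2 * Real.pi * σ ^ 2) ^ (-(n : ℝ) / 2))
  have he : ∀ v : EuclideanSpace ℝ (Fin n),
      -(1 / (2 * σ ^ 2)) * ‖v‖ ^ 2 = -‖v‖ ^ 2 / (2 * σ ^ 2) := by
    intro v; field_simp
  refine (h4.congr_fderiv ?_).congr_of_eventuallyEq (Filter.Eventually.of_forall fun z => ?_)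
  · ext z
    simp only [Function.comp_apply, he u, gaussianKernel,
      ContinuousLinearMap.coe_smul', Pi.smul_apply, smul_eq_mul]
    ring
  · simp only [gaussianKernel, Function.comp_apply, he z]

end Aux

/-- Score of the Gaussian-smoothed density as a posterior expectation (Tweedie-type
identity): for a probability density `p` on `ℝⁿ` and `σ > 0`, at every `y` the smoothed
density `q_σ(y)` is positive, `log q_σ` is differentiable at `y`, and
`∇ log q_σ(y) = (1/q_σ(y)) ∫ p(x) ((x - y)/σ²) φ_σ(y - x) dx`. -/
theorem smoothed_density_score {n : ℕ}
    (p : EuclideanSpace ℝ (Fin n) → ℝ)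
    (hpm : Measurable p) (hp0 : ∀ x, 0 ≤ p x)
    (hp1 : ∫ x, p x = 1)
    (σ : ℝ) (hσ : 0 < σ) :
    ∀ y : EuclideanSpace ℝ (Fin n),
      0 < smoothedDensity n σ p y ∧
      DifferentiableAt ℝ (fun y' => Real.log (smoothedDensity n σ p y')) y ∧
      gradient (fun y' => Real.log (smoothedDensity n σ p y')) y =
        (smoothedDensity n σ p y)⁻¹ •
          ∫ x, (p x * gaussianKernel n σ (y - x) / σ ^ 2) • (x - y) := by
  intro y
  set C : ℝ := (2 * Real.pi * σ ^ 2) ^ (-(n : ℝ) / 2) with hC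
  have hCpos : 0 < C := Real.rpow_pos_of_pos (by positivity) _
  set M : ℝ := C * (Real.sqrt 2 * σ) / σ ^ 2 with hM
  have hMpos : 0 < M := by positivity
  -- p is integrable
  have hp_int : Integrable p := by
    by_contra h
    rw [integral_undef h] at hp1
    norm_num at hp1
  -- measurability of the integrand for each y'
  have hgm : ∀ y' : EuclideanSpace ℝ (Fin n),
      Measurable (fun x => gaussianKernel n σ (y' - x)) := fun y' =>
    (gaussianKernel_continuous.comp (continuous_const.sub continuous_id)).measurable
  have hmeas : ∀ y' : EuclideanSpace ℝ (Fin n),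
      AEStronglyMeasurable (fun x => p x * gaussianKernel n σ (y' - x)) :=
    fun y' => (hpm.mul (hgm y')).aestronglyMeasurable
  -- integrability of the integrand
  have hq_int : ∀ y' : EuclideanSpace ℝ (Fin n),
      Integrable (fun x => p x * gaussianKernel n σ (y' - x)) := by
    intro y'
    apply Integrable.mono' (hp_int.const_mul C) (hmeas y')
    filter_upwards with x
    rw [Real.norm_eq_abs, abs_of_nonneg (mul_nonneg (hp0 x) (gaussianKernel_pos hσ _).le)]
    calc p x * gaussianKernel n σ (y' - x) ≤ p x * C :=
          mul_le_mul_of_nonneg_left (gaussianKernel_le hσ _) (hp0 x)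
      _ = C * p x := mul_comm _ _
  -- bound on the derivative of the kernel
  have hgk_bound : ∀ u : EuclideanSpace ℝ (Fin n),
      gaussianKernel n σ u / σ ^ 2 * ‖u‖ ≤ M := by
    intro u
    have h1 : ‖u‖ * Real.exp (-‖u‖ ^ 2 / (2 * σ ^ 2)) ≤ Real.sqrt 2 * σ :=
      mul_exp_neg_sq_le hσ (norm_nonneg u)
    have h2 : gaussianKernel n σ u * ‖u‖ ≤ C * (Real.sqrt 2 * σ) := by
      calc gaussianKernel n σ u * ‖u‖
          = C * (‖u‖ * Real.exp (-‖u‖ ^ 2 / (2 * σ ^ 2))) := by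
            simp only [gaussianKernel, hC]; ring
        _ ≤ C * (Real.sqrt 2 * σ) := mul_le_mul_of_nonneg_left h1 hCpos.le
    rw [hM, div_mul_eq_mul_div, div_le_div_iff₀ (by positivity) (by positivity)]
    nlinarith [sq_nonneg σ]
  -- positivity of the smoothed density
  have hq_pos : 0 < smoothedDensity n σ p y := by
    rw [smoothedDensity,
      integral_pos_iff_support_of_nonneg
        (fun x => mul_nonneg (hp0 x) (gaussianKernel_pos hσ (y - x)).le) (hq_int y)]
    have hss : Function.support (fun x => p x * gaussianKernel n σ (y - x)) =
        Function.support p := by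
      ext x
      simp only [Function.mem_support, mul_ne_zero_iff]
      exact ⟨fun h => h.1, fun h => ⟨h, (gaussianKernel_pos hσ _).ne'⟩⟩
    rw [hss]
    by_contra hs
    push_neg at hs
    have h0 : volume (Function.support p) = 0 := le_antisymm hs zero_le
    have hae : ∀ᵐ x, p x = 0 := by
      rw [ae_iff]
      simpa [Function.support] using h0
    rw [integral_eq_zero_of_ae hae] at hp1
    norm_num at hp1
  -- vector field under the integral
  set w : EuclideanSpace ℝ (Fin n) → EuclideanSpace ℝ (Fin n) := fun x =>
    (p x * gaussianKernel n σ (y - x) / σ ^ 2) • (x - y) with hw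
  have hscal_nonneg : ∀ (y' x : EuclideanSpace ℝ (Fin n)),
      0 ≤ p x * gaussianKernel n σ (y' - x) / σ ^ 2 := fun y' x =>
    div_nonneg (mul_nonneg (hp0 x) (gaussianKernel_pos hσ _).le) (by positivity)
  have hw_meas : AEStronglyMeasurable w := by
    refine AEStronglyMeasurable.smul (f := fun x => p x * gaussianKernel n σ (y - x) / σ ^ 2)
      (g := fun x => x - y) ?_ ?_
    · exact ((hpm.mul (hgm y)).div_const _).aestronglyMeasurable
    · exact (continuous_id.sub continuous_const).aestronglyMeasurable
  have hnorm_aux : ∀ (y' x : EuclideanSpace ℝ (Fin n)),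
      ‖(p x * gaussianKernel n σ (y' - x) / σ ^ 2) • (x - y')‖ ≤ M * p x := by
    intro y' x
    rw [norm_smul, Real.norm_eq_abs, abs_of_nonneg (hscal_nonneg y' x)]
    calc p x * gaussianKernel n σ (y' - x) / σ ^ 2 * ‖x - y'‖
        = p x * (gaussianKernel n σ (y' - x) / σ ^ 2 * ‖y' - x‖) := by
          rw [norm_sub_rev]; ring
      _ ≤ p x * M := mul_le_mul_of_nonneg_left (hgk_bound _) (hp0 x)
      _ = M * p x := mul_comm _ _
  have hw_int : Integrable w := by
    apply Integrable.mono' (hp_int.const_mul M) hw_meas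
    filter_upwards with x using hnorm_aux y x
  -- the derivative candidate as a family of continuous linear maps
  set F' : EuclideanSpace ℝ (Fin n) → EuclideanSpace ℝ (Fin n) →
      EuclideanSpace ℝ (Fin n) →L[ℝ] ℝ := fun y' x =>
    innerSL ℝ ((p x * gaussianKernel n σ (y' - x) / σ ^ 2) • (x - y')) with hF'
  have hF'_norm : ∀ y' x, ‖F' y' x‖ ≤ M * p x := by
    intro y' x
    rw [hF']
    simp only [innerSL_apply_norm]
    exact hnorm_aux y' x
  -- pointwise differentiability in the parameter
  have hdiff : ∀ (x : EuclideanSpace ℝ (Fin n)) (y' : EuclideanSpace ℝ (Fin n)),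
      HasFDerivAt (fun z => p x * gaussianKernel n σ (z - x)) (F' y' x) y' := by
    intro x y'
    have h1 := (gaussianKernel_hasFDerivAt hσ (y' - x)).comp y'
      ((hasFDerivAt_id y').sub_const x)
    have h2 := h1.const_mul (p x)
    refine h2.congr_fderiv ?_
    ext z
    simp only [hF', innerSL_apply_apply, real_inner_smul_left, ContinuousLinearMap.smul_apply,
      ContinuousLinearMap.coe_comp', Function.comp_apply, ContinuousLinearMap.coe_id',
      id_eq, smul_eq_mul, ContinuousLinearMap.coe_smul', Pi.smul_apply]
    have hinner : inner ℝ (x - y') z = -(inner ℝ (y' - x) z : ℝ) := by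
      rw [← inner_neg_left]; congr 1; abel
    rw [hinner]
    ring
  have hF'y_meas : AEStronglyMeasurable (F' y) := by
    have hc : Continuous fun v : EuclideanSpace ℝ (Fin n) => innerSL ℝ v :=
      (innerSL ℝ).continuous
    exact hc.comp_aestronglyMeasurable hw_meas
  -- differentiate under the integral sign
  have hderiv : HasFDerivAt (smoothedDensity n σ p) (∫ x, F' y x) y := by
    exact hasFDerivAt_integral_of_dominated_of_fderiv_le (𝕜 := ℝ)
      (F := fun y' x => p x * gaussianKernel n σ (y' - x)) (F' := F')
      (bound := fun x => M * p x) (x₀ := y) (Metric.ball_mem_nhds y one_pos)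
      (Filter.Eventually.of_forall hmeas) (hq_int y) hF'y_meas
      (Filter.Eventually.of_forall fun x y' _ => hF'_norm y' x)
      (hp_int.const_mul M)
      (Filter.Eventually.of_forall fun x y' _ => hdiff x y')
  have hF'_int : Integrable (F' y) := by
    apply Integrable.mono' (hp_int.const_mul M) hF'y_meas
    filter_upwards with x using hF'_norm y x
  -- identify the derivative with the inner product against the vector integral
  have hkey : (∫ x, F' y x) = innerSL ℝ (∫ x, w x) := by
    ext z
    rw [ContinuousLinearMap.integral_apply hF'_int z]
    have h1 : (innerSL ℝ (∫ x, w x)) z = inner ℝ z (∫ x, w x) := by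
      rw [innerSL_apply_apply, real_inner_comm]
    rw [h1, ← integral_inner hw_int z]
    congr 1
    funext x
    rw [hF', innerSL_apply_apply, real_inner_comm]
  rw [hkey] at hderiv
  -- chain rule with log
  have hlog : HasFDerivAt (fun y' => Real.log (smoothedDensity n σ p y'))
      ((smoothedDensity n σ p y)⁻¹ • innerSL ℝ (∫ x, w x)) y :=
    (Real.hasDerivAt_log hq_pos.ne').comp_hasFDerivAt y hderiv
  have hgrad : HasGradientAt (fun y' => Real.log (smoothedDensity n σ p y'))
      ((smoothedDensity n σ p y)⁻¹ • ∫ x, w x) y := by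
    rw [hasGradientAt_iff_hasFDerivAt]
    refine hlog.congr_fderiv ?_
    ext z
    simp [InnerProductSpace.toDual_apply_apply, real_inner_smul_left]
  exact ⟨hq_pos, hlog.differentiableAt, hgrad.gradient⟩
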